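/- The multiplication on the strands algebra A(n,k) is associative: for partial permutations a = (S,T,φ), b = (T,V,ψ), c = (V,W,χ), we have (a·b)·c = a·(b·c), where the product (S,T,φ)·(U,V,ψ) is (S,V,ψ∘φ) if T = U and inv(φ)+inv(ψ) = inv(ψ∘φ), and 0 otherwise. -/

import Mathlib

/-- A generator `(S, T, φ)` of the strands algebra `A(n,k)`: `S`, `T` are
`k`-element subsets of `{1,…,n}` and `φ : S → T` is a non-decreasing bijection
(upward-veering strands: `x ≤ φ x`). -/
structure StrandsGen (n k : ℕ) where
  S : Finset (Fin n)
  T : Finset (Fin n)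
  hS : S.card = k
  hT : T.card = k
  str : {x // x ∈ S} ≃ {x // x ∈ T}
  nondec : ∀ x : {x // x ∈ S}, (x : Fin n) ≤ (str x : Fin n)

/-- The number of inversions of `φ`. -/
def strandInv {n : ℕ} {S T : Finset (Fin n)} (φ : {x // x ∈ S} ≃ {x // x ∈ T}) : ℕ :=
  (Finset.univ.filter fun p : {x // x ∈ S} × {x // x ∈ S} =>
    (p.1 : Fin n) < (p.2 : Fin n) ∧ (φ p.2 : Fin n) < (φ p.1 : Fin n)).card

def castMem {n : ℕ} {T U : Finset (Fin n)} (h : T = U) : {x // x ∈ T} ≃ {x // x ∈ U} :=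
  Equiv.subtypeEquivProp (by rw [h])

/-- Composite generator `(S, V, ψ ∘ φ)`. -/
def StrandsGen.comp {n k : ℕ} (a b : StrandsGen n k) (h : a.T = b.S) : StrandsGen n k where
  S := a.S
  T := b.T
  hS := a.hS
  hT := b.hT
  str := (a.str.trans (castMem h)).trans b.str
  nondec := fun x => le_trans (a.nondec x) (b.nondec (castMem h (a.str x)))

/-- The strands algebra multiplication on generators: `(S,T,φ)·(U,V,ψ)` is
`(S,V,ψ∘φ)` if `T = U` and `inv φ + inv ψ = inv (ψ ∘ φ)`, and `0` (here `none`)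
otherwise. -/
def StrandsGen.mul {n k : ℕ} (a b : StrandsGen n k) : Option (StrandsGen n k) :=
  if h : a.T = b.S then
    if strandInv (a.comp b h).str = strandInv a.str + strandInv b.str then
      some (a.comp b h)
    else none
  else none

/-- Multiplication extended to `0` on the left. -/
def StrandsGen.mulL {n k : ℕ} : Option (StrandsGen n k) → StrandsGen n k → Option (StrandsGen n k)
  | none, _ => none
  | some a, b => a.mul b

/-- Multiplication extended to `0` on the right. -/
def StrandsGen.mulR {n k : ℕ} : StrandsGen n k → Option (StrandsGen n k) → Option (StrandsGen n k)
  | _, none => none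
  | a, some b => a.mul b

lemma comp_assoc {n k : ℕ} (a b c : StrandsGen n k) (h1 : a.T = b.S) (h2 : b.T = c.S) :
    (a.comp b h1).comp c h2 = a.comp (b.comp c h2) h1 := by
  simp only [StrandsGen.comp, StrandsGen.mk.injEq, heq_eq_eq, true_and]
  rfl

lemma inv_comp_le {n : ℕ} {S T U V : Finset (Fin n)} (h : T = U)
    (φ : {x // x ∈ S} ≃ {x // x ∈ T}) (ψ : {x // x ∈ U} ≃ {x // x ∈ V}) :
    strandInv ((φ.trans (castMem h)).trans ψ) ≤ strandInv φ + strandInv ψ := by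
  classical
  set F : {x // x ∈ S} → {x // x ∈ U} := fun x => castMem h (φ x) with hF
  have hFval : ∀ x, (F x : Fin n) = (φ x : Fin n) := fun x => rfl
  have hFinj : Function.Injective F := (castMem h).injective.comp φ.injective
  set X1 := Finset.univ.filter fun p : {x // x ∈ S} × {x // x ∈ S} =>
    (p.1 : Fin n) < (p.2 : Fin n) ∧ (φ p.1 : Fin n) < (φ p.2 : Fin n) ∧
      (ψ (F p.2) : Fin n) < (ψ (F p.1) : Fin n) with hX1
  set X2 := Finset.univ.filter fun p : {x // x ∈ S} × {x // x ∈ S} =>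
    (p.1 : Fin n) < (p.2 : Fin n) ∧ (φ p.2 : Fin n) < (φ p.1 : Fin n) with hX2
  have hsub : (Finset.univ.filter fun p : {x // x ∈ S} × {x // x ∈ S} =>
      (p.1 : Fin n) < (p.2 : Fin n) ∧
        ((((φ.trans (castMem h)).trans ψ) p.2 : Fin n) < (((φ.trans (castMem h)).trans ψ) p.1 : Fin n)))
      ⊆ X1 ∪ X2 := by
    intro p hp
    simp only [Finset.mem_filter, Finset.mem_univ, true_and] at hp
    have hne : (φ p.1 : Fin n) ≠ (φ p.2 : Fin n) := by
      intro hval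
      have : p.1 = p.2 := φ.injective (Subtype.ext hval)
      exact absurd (congrArg Subtype.val this) (ne_of_lt hp.1)
    rcases lt_or_gt_of_ne hne with hlt | hgt
    · apply Finset.mem_union_left
      simp only [hX1, Finset.mem_filter, Finset.mem_univ, true_and]
      exact ⟨hp.1, hlt, hp.2⟩
    · apply Finset.mem_union_right
      simp only [hX2, Finset.mem_filter, Finset.mem_univ, true_and]
      exact ⟨hp.1, hgt⟩
  have h1 : X1.card ≤ strandInv ψ := by
    apply Finset.card_le_card_of_injOn (fun p => (F p.1, F p.2))
    · intro p hp
      change p ∈ X1 at hp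
      simp only [hX1, Finset.mem_filter, Finset.mem_univ, true_and] at hp
      simp only [strandInv, Finset.coe_filter, Finset.mem_coe, Finset.mem_filter, Set.mem_setOf_eq, Finset.mem_univ, true_and]
      exact ⟨by simpa [hFval] using hp.2.1, hp.2.2⟩
    · intro p _ q _ hpq
      have h1 := hFinj (congrArg Prod.fst hpq)
      have h2 := hFinj (congrArg Prod.snd hpq)
      exact Prod.ext h1 h2
  have h2 : X2.card = strandInv φ := rfl
  calc strandInv ((φ.trans (castMem h)).trans ψ) ≤ (X1 ∪ X2).card :=
        Finset.card_le_card hsub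
    _ ≤ X1.card + X2.card := Finset.card_union_le _ _
    _ ≤ strandInv ψ + strandInv φ := by omega
    _ = strandInv φ + strandInv ψ := Nat.add_comm _ _

/-- The multiplication of the strands algebra `A(n,k)` is associative:
`(a·b)·c = a·(b·c)` for generators `a = (S,T,φ)`, `b = (T,V,ψ)`, `c = (V,W,χ)`. -/
theorem strands_mul_assoc {n k : ℕ} (a b c : StrandsGen n k) :
    StrandsGen.mulL (a.mul b) c = StrandsGen.mulR a (b.mul c) := by
  by_cases h1 : a.T = b.S
  · by_cases h2 : b.T = c.S
    · -- both compositions defined at the level of sets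
      have hABle : strandInv (a.comp b h1).str ≤ strandInv a.str + strandInv b.str :=
        inv_comp_le h1 a.str b.str
      have hBCle : strandInv (b.comp c h2).str ≤ strandInv b.str + strandInv c.str :=
        inv_comp_le h2 b.str c.str
      have hN1 : strandInv ((a.comp b h1).comp c h2).str
          ≤ strandInv (a.comp b h1).str + strandInv c.str :=
        inv_comp_le h2 (a.comp b h1).str c.str
      have hN : strandInv ((a.comp b h1).comp c h2).str
          = strandInv (a.comp (b.comp c h2) h1).str := by
        rw [comp_assoc]
      have hN2 : strandInv ((a.comp b h1).comp c h2).str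
          ≤ strandInv a.str + strandInv (b.comp c h2).str := by
        rw [hN]; exact inv_comp_le h1 a.str (b.comp c h2).str
      have h2' : (a.comp b h1).T = c.S := h2
      have h1' : a.T = (b.comp c h2).S := h1
      by_cases hI1 : strandInv (a.comp b h1).str = strandInv a.str + strandInv b.str
      · have e1 : a.mul b = some (a.comp b h1) := by
          unfold StrandsGen.mul; rw [dif_pos h1, if_pos hI1]
        by_cases hI2 : strandInv (b.comp c h2).str = strandInv b.str + strandInv c.str
        · have e2 : b.mul c = some (b.comp c h2) := by
            unfold StrandsGen.mul; rw [dif_pos h2, if_pos hI2]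
          rw [e1, e2]
          show (a.comp b h1).mul c = a.mul (b.comp c h2)
          unfold StrandsGen.mul
          rw [dif_pos h2', dif_pos h1', hI1, hI2, hN, comp_assoc a b c h1 h2, Nat.add_assoc]
        · have e2 : b.mul c = none := by
            unfold StrandsGen.mul; rw [dif_pos h2, if_neg hI2]
          rw [e1, e2]
          show (a.comp b h1).mul c = none
          unfold StrandsGen.mul
          rw [dif_pos h2', if_neg ?_]
          intro hJ
          exact hI2 (by omega)
      · have e1 : a.mul b = none := by
          unfold StrandsGen.mul; rw [dif_pos h1, if_neg hI1]
        rw [e1]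
        by_cases hI2 : strandInv (b.comp c h2).str = strandInv b.str + strandInv c.str
        · have e2 : b.mul c = some (b.comp c h2) := by
            unfold StrandsGen.mul; rw [dif_pos h2, if_pos hI2]
          rw [e2]
          show none = a.mul (b.comp c h2)
          unfold StrandsGen.mul
          rw [dif_pos h1', if_neg ?_]
          intro hJ
          rw [← hN] at hJ
          exact hI1 (by omega)
        · have e2 : b.mul c = none := by
            unfold StrandsGen.mul; rw [dif_pos h2, if_neg hI2]
          rw [e2]; rfl
    · -- b.T ≠ c.S
      have e2 : b.mul c = none := by unfold StrandsGen.mul; rw [dif_neg h2]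
      rw [e2]
      by_cases hI1 : strandInv (a.comp b h1).str = strandInv a.str + strandInv b.str
      · have e1 : a.mul b = some (a.comp b h1) := by
          unfold StrandsGen.mul; rw [dif_pos h1, if_pos hI1]
        rw [e1]
        show (a.comp b h1).mul c = none
        unfold StrandsGen.mul
        exact dif_neg (show ¬((a.comp b h1).T = c.S) from h2)
      · have e1 : a.mul b = none := by
          unfold StrandsGen.mul; rw [dif_pos h1, if_neg hI1]
        rw [e1]; rfl
  · -- a.T ≠ b.S
    have e1 : a.mul b = none := by unfold StrandsGen.mul; rw [dif_neg h1]
    rw [e1]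
    by_cases h2 : b.T = c.S
    · by_cases hI2 : strandInv (b.comp c h2).str = strandInv b.str + strandInv c.str
      · have e2 : b.mul c = some (b.comp c h2) := by
          unfold StrandsGen.mul; rw [dif_pos h2, if_pos hI2]
        rw [e2]
        show none = a.mul (b.comp c h2)
        unfold StrandsGen.mul
        symm
        exact dif_neg (show ¬(a.T = (b.comp c h2).S) from h1)
      · have e2 : b.mul c = none := by
          unfold StrandsGen.mul; rw [dif_pos h2, if_neg hI2]
        rw [e2]; rfl
    · have e2 : b.mul c = none := by unfold StrandsGen.mul; rw [dif_neg h2]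
      rw [e2]; rfl
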